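/- The infinite word w = x₁ (x₂)³ (x₁)⁷ (x₂)¹⁵ ⋯ is not in L_ss, i.e., neither π₁(w) nor π₂(w) has a safe suffix. -/

import Mathlib

/-- The alphabet `I = {0, +, -}`. -/
inductive I : Type
  | zero | plus | minus
deriving DecidableEq, Inhabited

/-- Value of a single letter. -/
def lv : I → ℤ
  | I.zero => 0
  | I.plus => 1
  | I.minus => -1

/-- Energy level of a finite word. -/
def EL (v : List I) : ℤ := (v.map lv).sum

/-- The prefix `w(0) ⋯ w(n-1)` of an infinite word, of length `n`. -/
def prefixWord (w : ℕ → I) (n : ℕ) : List I := (List.range n).map w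

/-- `w` is safe if every nonempty prefix has nonnegative energy level. -/
def Safe (w : ℕ → I) : Prop := ∀ n : ℕ, 0 ≤ EL (prefixWord w (n + 1))

/-- `w` has a safe suffix. -/
def HasSafeSuffix (w : ℕ → I) : Prop := ∃ n : ℕ, Safe (fun k => w (n + k))

/-- The word `x₁ = (+,0)(+,-)`. -/
def x1 : List (I × I) := [(I.plus, I.zero), (I.plus, I.minus)]

/-- The word `x₂ = (0,+)(-,+)`. -/
def x2 : List (I × I) := [(I.zero, I.plus), (I.minus, I.plus)]

/-- The `k`-th building block word: `x₁` if `k` is odd, `x₂` if `k` is even. -/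
def blockWord (k : ℕ) : List (I × I) := if k % 2 = 1 then x1 else x2

/-- The `k`-th block: `2^k - 1` copies of `blockWord k`. -/
def blk (k : ℕ) : List (I × I) := (List.replicate (2 ^ k - 1) (blockWord k)).flatten

/-- Concatenation of blocks `1, …, j`, i.e. `x₁ (x₂)³ (x₁)⁷ ⋯`. -/
def P (j : ℕ) : List (I × I) := ((List.range j).map (fun i => blk (i + 1))).flatten

/-- The infinite word `w_ss̄ = x₁ (x₂)³ (x₁)⁷ (x₂)¹⁵ ⋯`; the `n`-th letter is read off from
a sufficiently long finite prefix of blocks. -/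
def wss (n : ℕ) : I × I := (P (n + 1)).getD n (I.zero, I.zero)

lemma EL_append (a b : List I) : EL (a ++ b) = EL a + EL b := by simp [EL]

lemma EL_join_replicate (m : ℕ) (l : List I) :
    EL ((List.replicate m l).flatten) = m * EL l := by
  induction m with
  | zero => simp [EL]
  | succ m ih =>
    rw [List.replicate_succ, List.flatten_cons, EL_append, ih]
    push_cast; ring

lemma P_succ (j : ℕ) : P (j + 1) = P j ++ blk (j + 1) := by
  simp [P, List.range_succ]

lemma P_prefix {i j : ℕ} (h : i ≤ j) : P i <+: P j := by
  induction j with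
  | zero => simpa [Nat.le_zero.mp h]
  | succ j ih =>
    rcases eq_or_lt_of_le h with rfl | h'
    · exact List.prefix_rfl
    · exact (ih (Nat.lt_succ_iff.mp h')).trans ⟨blk (j+1), (P_succ j).symm⟩

lemma length_blk (k : ℕ) : (blk k).length = (2 ^ k - 1) * 2 := by
  rw [blk, List.length_flatten, List.map_replicate, List.sum_replicate, smul_eq_mul]
  congr 1
  unfold blockWord
  split <;> simp [x1, x2]

lemma length_P_ge (j : ℕ) : 2 * j ≤ (P j).length := by
  induction j with
  | zero => simp
  | succ j ih =>
    rw [P_succ, List.length_append, length_blk]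
    have h1 : 1 ≤ 2 ^ (j + 1) - 1 := by
      have : 2 ≤ 2 ^ (j + 1) := Nat.one_lt_two_pow (by omega)
      omega
    omega

lemma wss_eq {j n : ℕ} (h : n < (P j).length) :
    wss n = (P j).getD n (I.zero, I.zero) := by
  have key : ∀ {a b : ℕ}, a ≤ b → n < (P a).length →
      (P b).getD n (I.zero, I.zero) = (P a).getD n (I.zero, I.zero) := by
    intro a b hab hn
    obtain ⟨t, ht⟩ := P_prefix hab
    rw [← ht, List.getD_eq_getElem?_getD, List.getD_eq_getElem?_getD,
      List.getElem?_append_left hn]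
  have hn1 : n < (P (n + 1)).length := lt_of_lt_of_le (by omega) (length_P_ge (n+1))
  rcases le_total (n + 1) j with h' | h'
  · rw [wss, key h' hn1]
  · rw [wss, (key h' h).symm]

lemma EL_blk_fst (k : ℕ) :
    EL ((blk k).map Prod.fst) = (2 ^ k - 1 : ℕ) * (if k % 2 = 1 then 2 else -1) := by
  rw [blk, List.map_flatten, List.map_replicate, EL_join_replicate]
  congr 1
  unfold blockWord
  split <;> simp [x1, x2, EL, lv]

lemma EL_blk_snd (k : ℕ) :
    EL ((blk k).map Prod.snd) = (2 ^ k - 1 : ℕ) * (if k % 2 = 1 then -1 else 2) := by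
  rw [blk, List.map_flatten, List.map_replicate, EL_join_replicate]
  congr 1
  unfold blockWord
  split <;> simp [x1, x2, EL, lv]

lemma cast_pow_sub (k : ℕ) : ((2 ^ k - 1 : ℕ) : ℤ) = 2 ^ k - 1 := by
  have : 1 ≤ 2 ^ k := Nat.one_le_two_pow
  push_cast [this]; ring

lemma EL_map_P_succ (f : I × I → I) (j : ℕ) :
    EL ((P (j + 1)).map f) = EL ((P j).map f) + EL ((blk (j + 1)).map f) := by
  rw [P_succ, List.map_append, EL_append]

lemma A_even (m : ℕ) : EL ((P (2 * m)).map Prod.fst) = -m := by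
  induction m with
  | zero => simp [P, EL]
  | succ m ih =>
    have h1 : 2 * (m + 1) = (2 * m + 1) + 1 := by ring
    rw [h1, EL_map_P_succ, EL_map_P_succ, ih, EL_blk_fst, EL_blk_fst,
      cast_pow_sub, cast_pow_sub]
    have e1 : (2 * m + 1) % 2 = 1 := by omega
    have e2 : (2 * m + 1 + 1) % 2 = 0 := by omega
    rw [if_pos e1, if_neg (by omega)]
    have hp : (2 : ℤ) ^ (2 * m + 1 + 1) = 2 * 2 ^ (2 * m + 1) := by ring
    rw [hp]; push_cast; ring

lemma B_odd (m : ℕ) : EL ((P (2 * m + 1)).map Prod.snd) = -(m + 1) := by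
  induction m with
  | zero =>
    have : P 1 = blk 1 := by simp [P, List.range_succ]
    rw [this]
    simp [blk, blockWord, x1, EL, lv]
  | succ m ih =>
    have h1 : 2 * (m + 1) + 1 = (2 * m + 1 + 1) + 1 := by ring
    rw [h1, EL_map_P_succ, EL_map_P_succ, ih, EL_blk_snd, EL_blk_snd,
      cast_pow_sub, cast_pow_sub]
    rw [if_neg (by omega), if_pos (by omega)]
    have hp : (2 : ℤ) ^ (2 * m + 1 + 1 + 1) = 2 * 2 ^ (2 * m + 1 + 1) := by ring
    rw [hp]; push_cast; ring

lemma prefixWord_proj (f : I × I → I) (j : ℕ) :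
    prefixWord (fun n => f (wss n)) ((P j).length) = (P j).map f := by
  apply List.ext_getElem
  · simp [prefixWord]
  · intro n h1 h2
    simp only [prefixWord, List.getElem_map, List.getElem_range]
    have hn : n < (P j).length := by simpa [prefixWord] using h1
    rw [wss_eq hn, List.getD_eq_getElem?_getD, List.getElem?_eq_getElem hn]
    rfl

lemma prefixWord_add (w : ℕ → I) (n t : ℕ) :
    prefixWord w (n + t) = prefixWord w n ++ prefixWord (fun k => w (n + k)) t := by
  simp [prefixWord, List.range_add, Function.comp]

lemma not_safe_of_unbounded (w : ℕ → I)
    (hub : ∀ c : ℤ, ∀ N : ℕ, ∃ m : ℕ, N ≤ m ∧ EL (prefixWord w m) < c) :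
    ¬ HasSafeSuffix w := by
  rintro ⟨n, hsafe⟩
  obtain ⟨m, hm, hlt⟩ := hub (EL (prefixWord w n)) (n + 1)
  have ht : n + (m - n) = m := by omega
  have := hsafe (m - n - 1)
  rw [show m - n - 1 + 1 = m - n by omega] at this
  have hEL : EL (prefixWord w m) =
      EL (prefixWord w n) + EL (prefixWord (fun k => w (n + k)) (m - n)) := by
    rw [← ht, prefixWord_add, EL_append, ht]
  omega

theorem wss_not_in_Lss :
    ¬ (HasSafeSuffix (fun n => (wss n).1) ∨ HasSafeSuffix (fun n => (wss n).2)) := by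
  rintro (h | h)
  · refine not_safe_of_unbounded _ ?_ h
    intro c N
    refine ⟨(P (2 * max N (c.natAbs + 1))).length,
      le_trans (by omega) (length_P_ge _), ?_⟩
    rw [show (fun n => (wss n).1) = (fun n => Prod.fst (wss n)) from rfl,
      prefixWord_proj, A_even]
    have h1 : c.natAbs + 1 ≤ max N (c.natAbs + 1) := le_max_right _ _
    omega
  · refine not_safe_of_unbounded _ ?_ h
    intro c N
    refine ⟨(P (2 * max N (c.natAbs + 1) + 1)).length,
      le_trans (by omega) (length_P_ge _), ?_⟩
    rw [show (fun n => (wss n).2) = (fun n => Prod.snd (wss n)) from rfl,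
      prefixWord_proj, B_odd]
    have h1 : c.natAbs + 1 ≤ max N (c.natAbs + 1) := le_max_right _ _
    omega
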